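/- There exists a functional Θ that, given any g : (ℕ → ℕ) → ℕ, returns a finite list of binary sequences f₀,…,fₙ ∈ 2^ℕ and a number k such that the basic open neighbourhoods determined by the initial segments f̄ᵢ(g(fᵢ)) cover Cantor space 2^ℕ, and k bounds all the values g(fᵢ); equivalently, for every binary tree T, if no fᵢ has its initial segment of length g(fᵢ) in T, then every binary sequence β has some initial segment of length ≤ k not in T. -/

import Mathlib

/-- The initial segment `⟨f 0, …, f (n-1)⟩` of `f` of length `n`. -/
def seg (f : ℕ → ℕ) (n : ℕ) : List ℕ := (List.range n).map f

/-- `T` is a binary tree: all entries are bits and `T` is closed under initial segments. -/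
def IsBinaryTree (T : Set (List ℕ)) : Prop :=
  (∀ σ ∈ T, ∀ m ∈ σ, m ≤ 1) ∧ ∀ σ ∈ T, ∀ n, σ.take n ∈ T

private def toN (b : ℕ → Bool) : ℕ → ℕ := fun n => if b n then 1 else 0

private lemma key (g : (ℕ → ℕ) → ℕ) :
    ∃ p : List (ℕ → ℕ) × ℕ,
        (∀ f ∈ p.1, ∀ n, f n ≤ 1) ∧
        (∀ f ∈ p.1, g f ≤ p.2) ∧
        (∀ β : ℕ → ℕ, (∀ n, β n ≤ 1) →
          ∃ f ∈ p.1, seg β (g f) = seg f (g f)) ∧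
        (∀ T : Set (List ℕ), IsBinaryTree T →
          (∀ f ∈ p.1, seg f (g f) ∉ T) →
          ∀ β : ℕ → ℕ, (∀ n, β n ≤ 1) → ∃ i ≤ p.2, seg β i ∉ T) := by
  classical
  set U : (ℕ → Bool) → Set (ℕ → Bool) :=
    fun b => {c | ∀ n < g (toN b), c n = b n} with hU
  have hopen : ∀ b, IsOpen (U b) := by
    intro b
    have : U b = Set.pi (↑(Finset.range (g (toN b))) : Set ℕ) (fun n => {b n}) := by
      ext c; simp [hU, Set.mem_pi]
    rw [this]
    exact isOpen_set_pi (Finset.range _).finite_toSet (fun n _ => isOpen_discrete _)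
  have hcover : (Set.univ : Set (ℕ → Bool)) ⊆ ⋃ b, U b := by
    intro c _; exact Set.mem_iUnion.2 ⟨c, fun n _ => rfl⟩
  obtain ⟨t, ht⟩ := isCompact_univ.elim_finite_subcover U hopen hcover
  set L : List (ℕ → ℕ) := t.toList.map toN with hL
  set k : ℕ := (L.map g).sum with hk
  have h2 : ∀ f ∈ L, g f ≤ k :=
    fun f hf => List.single_le_sum (fun x _ => Nat.zero_le x) _ (List.mem_map_of_mem (f := g) hf)
  have h3 : ∀ β : ℕ → ℕ, (∀ n, β n ≤ 1) → ∃ f ∈ L, seg β (g f) = seg f (g f) := by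
    intro β hβ
    set b : ℕ → Bool := fun n => β n = 1 with hb
    have hbn : toN b = β := by
      funext n; have := hβ n; simp only [toN, hb]
      split <;> rename_i h <;> simp at h <;> omega
    have hmem : b ∈ ⋃ b₀ ∈ t, U b₀ := ht (Set.mem_univ b)
    simp only [Set.mem_iUnion] at hmem
    obtain ⟨b₀, hb₀t, hb₀⟩ := hmem
    refine ⟨toN b₀, List.mem_map_of_mem (f := toN) (Finset.mem_toList.2 hb₀t), ?_⟩
    simp only [seg, List.map_inj_left, List.mem_range]
    intro n hn
    rw [← hbn]
    simp only [toN, hb₀ n hn]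
  refine ⟨⟨L, k⟩, ?_, h2, h3, ?_⟩
  · intro f hf n
    simp only [hL, List.mem_map] at hf
    obtain ⟨b, _, rfl⟩ := hf
    unfold toN; split <;> omega
  · intro T _ hT β hβ
    obtain ⟨f, hf, hseg⟩ := h3 β hβ
    exact ⟨g f, h2 f hf, hseg ▸ hT f hf⟩


/-- Existence of a special fan functional `Θ` satisfying `SCF(Θ)`: for each
`g`, `Θ g` consists of a finite list of binary sequences whose neighbourhoods
`[f̄ᵢ (g fᵢ)]` cover Cantor space, together with a bound `k` on the values `g fᵢ`;
equivalently, for every binary tree `T`, if no `f̄ᵢ (g fᵢ)` lies in `T`, then every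
binary `β` has an initial segment of length `≤ k` outside `T`. -/
theorem special_fan_functional_exists :
    ∃ Θ : ((ℕ → ℕ) → ℕ) → List (ℕ → ℕ) × ℕ,
      ∀ g : (ℕ → ℕ) → ℕ,
        (∀ f ∈ (Θ g).1, ∀ n, f n ≤ 1) ∧
        (∀ f ∈ (Θ g).1, g f ≤ (Θ g).2) ∧
        (∀ β : ℕ → ℕ, (∀ n, β n ≤ 1) →
          ∃ f ∈ (Θ g).1, seg β (g f) = seg f (g f)) ∧
        (∀ T : Set (List ℕ), IsBinaryTree T →
          (∀ f ∈ (Θ g).1, seg f (g f) ∉ T) →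
          ∀ β : ℕ → ℕ, (∀ n, β n ≤ 1) → ∃ i ≤ (Θ g).2, seg β i ∉ T) := by
  exact ⟨fun g => (key g).choose, fun g => (key g).choose_spec⟩
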